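/- arXiv:2206.10444 — 5 statements merged into one kernel-verified Lean document; each statement's English description precedes it below -/
import Mathlib

section
/- Let A be an n×n real matrix with A + Aᵀ positive semidefinite, and let U be an n×k real matrix with γ > 0. Then A + γUUᵀ is nonsingular if and only if Ker(A) ∩ Ker(Uᵀ) = {0}. -/
open Matrix

theorem stmt_0 {n k : ℕ} (A : Matrix (Fin n) (Fin n) ℝ)
    (U : Matrix (Fin n) (Fin k) ℝ) (γ : ℝ) (hγ : 0 < γ)
    (hA : (A + Aᵀ).PosSemidef) :
    IsUnit (A + γ • (U * Uᵀ)) ↔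
      ∀ x : Fin n → ℝ, A *ᵥ x = 0 → Uᵀ *ᵥ x = 0 → x = 0 := by
  constructor
  · intro hU x hAx hUx
    have hM : (A + γ • (U * Uᵀ)) *ᵥ x = 0 := by
      rw [add_mulVec, smul_mulVec, ← mulVec_mulVec, hAx, hUx]
      simp
    have hinj := Matrix.mulVec_injective_iff_isUnit.mpr hU
    have : (A + γ • (U * Uᵀ)) *ᵥ x = (A + γ • (U * Uᵀ)) *ᵥ 0 := by
      simpa using hM
    exact hinj this
  · intro hker
    rw [Matrix.isUnit_iff_isUnit_det, isUnit_iff_ne_zero]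
    intro hdet
    obtain ⟨v, hv, hMv⟩ := (Matrix.exists_mulVec_eq_zero_iff).mpr hdet
    -- v ⬝ᵥ M v = 0
    have h0 : v ⬝ᵥ ((A + γ • (U * Uᵀ)) *ᵥ v) = 0 := by rw [hMv]; simp
    have key : v ⬝ᵥ (U *ᵥ (Uᵀ *ᵥ v)) = (Uᵀ *ᵥ v) ⬝ᵥ (Uᵀ *ᵥ v) := by
      rw [dotProduct_mulVec]
      congr 1
      rw [← mulVec_transpose]
    have hsplit : v ⬝ᵥ (A *ᵥ v) + γ * ((Uᵀ *ᵥ v) ⬝ᵥ (Uᵀ *ᵥ v)) = 0 := by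
      rw [← h0, add_mulVec, dotProduct_add, smul_mulVec, dotProduct_smul,
        ← mulVec_mulVec, key, smul_eq_mul]
    have hAv : 0 ≤ v ⬝ᵥ (A *ᵥ v) := by
      have := hA.dotProduct_mulVec_nonneg v
      have h2 : v ⬝ᵥ ((A + Aᵀ) *ᵥ v) = 2 * (v ⬝ᵥ (A *ᵥ v)) := by
        rw [add_mulVec, dotProduct_add]
        have : v ⬝ᵥ (Aᵀ *ᵥ v) = v ⬝ᵥ (A *ᵥ v) := by
          rw [dotProduct_mulVec, vecMul_transpose, dotProduct_comm]
        rw [this]; ring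
      simp only [RCLike.re_to_real, star_trivial] at this
      nlinarith [this]
    have hUU : 0 ≤ (Uᵀ *ᵥ v) ⬝ᵥ (Uᵀ *ᵥ v) := Finset.sum_nonneg fun i _ => mul_self_nonneg _
    have hUz : Uᵀ *ᵥ v = 0 := by
      have : (Uᵀ *ᵥ v) ⬝ᵥ (Uᵀ *ᵥ v) = 0 := by nlinarith
      exact dotProduct_self_eq_zero.mp this
    have hAz : A *ᵥ v = 0 := by
      have := hMv
      rw [add_mulVec, smul_mulVec, ← mulVec_mulVec, hUz] at this
      simpa using this
    exact hv (hker v hAz hUz)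
end

section
/- (Kellogg's Lemma) If A ∈ ℝ^{n×n} has positive definite symmetric part (i.e., A + Aᵀ is positive definite), then for every α > 0, the spectral norm of (αI − A)(αI + A)^{-1} is strictly less than 1. -/
open Matrix
open scoped RealInnerProductSpace

/-- The spectral (operator 2-) norm of a real square matrix. -/
noncomputable def spec2Norm {n : ℕ} (M : Matrix (Fin n) (Fin n) ℝ) : ℝ :=
  ‖Matrix.toEuclideanCLM (𝕜 := ℝ) M‖

theorem stmt_2 {n : ℕ} (A : Matrix (Fin n) (Fin n) ℝ)
    (hA : (A + Aᵀ).PosDef) (α : ℝ) (hα : 0 < α) :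
    spec2Norm ((α • (1 : Matrix (Fin n) (Fin n) ℝ) - A) *
      (α • (1 : Matrix (Fin n) (Fin n) ℝ) + A)⁻¹) < 1 := by
  set B : Matrix (Fin n) (Fin n) ℝ := α • 1 + A with hB
  set C : Matrix (Fin n) (Fin n) ℝ := α • 1 - A with hC
  -- quadratic form positivity
  have hq : ∀ y : Fin n → ℝ, y ≠ 0 → 0 < y ⬝ᵥ (A *ᵥ y) := by
    intro y hy
    have h := hA.dotProduct_mulVec_pos hy
    simp only [star_trivial, add_mulVec, dotProduct_add] at h
    have hsym : y ⬝ᵥ (Aᵀ *ᵥ y) = y ⬝ᵥ (A *ᵥ y) := by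
      rw [dotProduct_mulVec, vecMul_transpose, dotProduct_comm]
    rw [hsym] at h; linarith
  -- B is a unit
  have hBmv : ∀ y : Fin n → ℝ, B *ᵥ y = α • y + A *ᵥ y := by
    intro y; simp [hB, add_mulVec, smul_mulVec]
  have hBinj : Function.Injective B.mulVec := by
    intro y z hyz
    by_contra hne
    have hw : y - z ≠ 0 := sub_ne_zero.mpr hne
    have h0 : B *ᵥ (y - z) = 0 := by
      rw [mulVec_sub, hyz, sub_self]
    have hpos : 0 < (y - z) ⬝ᵥ (B *ᵥ (y - z)) := by
      rw [hBmv]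
      have h1 : 0 < (y - z) ⬝ᵥ (α • (y - z)) := by
        rw [dotProduct_smul]
        have hpp : 0 < (y - z) ⬝ᵥ (y - z) := by
          have := dotProduct_self_star_pos_iff (v := y - z)
          simpa using this.mpr hw
        positivity
      have h2 := hq (y - z) hw
      rw [dotProduct_add]
      linarith
    rw [h0, dotProduct_zero] at hpos
    exact lt_irrefl 0 hpos
  have hBunit : IsUnit B := mulVec_injective_iff_isUnit.mp hBinj
  -- operator abbreviations
  set T := fun M : Matrix (Fin n) (Fin n) ℝ => toEuclideanCLM (𝕜 := ℝ) M with hT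
  have hTB : ∀ y : EuclideanSpace ℝ (Fin n), T B y = α • y + T A y := by
    intro y
    simp only [hT, hB, map_add, _root_.map_smul, _root_.map_one, ContinuousLinearMap.add_apply,
      ContinuousLinearMap.smul_apply, ContinuousLinearMap.one_apply]
  have hTC : ∀ y : EuclideanSpace ℝ (Fin n), T C y = α • y - T A y := by
    intro y
    simp only [hT, hC, map_sub, _root_.map_smul, _root_.map_one, ContinuousLinearMap.sub_apply,
      ContinuousLinearMap.smul_apply, ContinuousLinearMap.one_apply]
  -- inner product identity
  have hinner : ∀ y : EuclideanSpace ℝ (Fin n),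
      ⟪y, T A y⟫ = (fun i => y i) ⬝ᵥ (A *ᵥ fun i => y i) := by
    intro y
    rw [PiLp.inner_apply]
    simp [RCLike.inner_apply, dotProduct, mulVec]
    simp only [hT, ofLp_toEuclideanCLM, mulVec, dotProduct]
    exact Finset.sum_congr rfl fun i _ => mul_comm _ _
  -- pointwise strict contraction for y ≠ 0
  have hkey : ∀ y : EuclideanSpace ℝ (Fin n), y ≠ 0 → ‖T C y‖ < ‖T B y‖ := by
    intro y hy
    have hyfun : (fun i => y i) ≠ (0 : Fin n → ℝ) := by
      intro h
      apply hy
      ext i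
      exact congrFun h i
    have hip : 0 < ⟪y, T A y⟫ := by rw [hinner]; exact hq _ hyfun
    have hsq : ‖T C y‖ ^ 2 < ‖T B y‖ ^ 2 := by
      rw [hTB, hTC]
      have h1 : ‖α • y + T A y‖ ^ 2 = ‖α • y‖ ^ 2 + 2 * ⟪α • y, T A y⟫ + ‖T A y‖ ^ 2 :=
        norm_add_sq_real _ _
      have h2 : ‖α • y - T A y‖ ^ 2 = ‖α • y‖ ^ 2 - 2 * ⟪α • y, T A y⟫ + ‖T A y‖ ^ 2 :=
        norm_sub_sq_real _ _
      have h3 : ⟪α • y, T A y⟫ = α * ⟪y, T A y⟫ := real_inner_smul_left _ _ _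
      rw [h1, h2, h3]
      nlinarith
    exact lt_of_pow_lt_pow_left₀ 2 (norm_nonneg _) hsq
  -- the product operator
  have hBBinv : B * B⁻¹ = 1 := mul_nonsing_inv B ((Matrix.isUnit_iff_isUnit_det B).mp hBunit)
  have hP : ∀ x : EuclideanSpace ℝ (Fin n), x ≠ 0 → ‖T (C * B⁻¹) x‖ < ‖x‖ := by
    intro x hx
    set y := T B⁻¹ x with hy
    have hTBy : T B y = x := by
      have : T B (T B⁻¹ x) = T (B * B⁻¹) x := by
        simp only [hT, _root_.map_mul, ContinuousLinearMap.mul_apply]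
      rw [hy, this, hBBinv]
      simp only [hT, _root_.map_one, ContinuousLinearMap.one_apply]
    have hyne : y ≠ 0 := by
      intro h
      rw [h, map_zero] at hTBy
      exact hx hTBy.symm
    have hTCB : T (C * B⁻¹) x = T C y := by
      simp only [hT, hy, _root_.map_mul, ContinuousLinearMap.mul_apply]
    rw [hTCB, ← hTBy]
    exact hkey y hyne
  -- conclude: operator norm < 1
  rcases Nat.eq_zero_or_pos n with hn | hn
  · subst hn
    have h0 : T (C * B⁻¹) = 0 := by
      ext x i
      exact i.elim0
    show ‖T (C * B⁻¹)‖ < 1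
    rw [h0, norm_zero]
    norm_num
  · haveI : Nontrivial (EuclideanSpace ℝ (Fin n)) := by
      have : Nonempty (Fin n) := ⟨⟨0, hn⟩⟩
      infer_instance
    obtain ⟨x₀, hx₀s, hx₀max⟩ := (isCompact_sphere (0 : EuclideanSpace ℝ (Fin n)) 1).exists_isMaxOn
      (NormedSpace.sphere_nonempty.mpr zero_le_one)
      ((ContinuousLinearMap.continuous _).norm.continuousOn (s := Metric.sphere 0 1)
        (f := fun x => ‖T (C * B⁻¹) x‖))
    have hx₀norm : ‖x₀‖ = 1 := mem_sphere_zero_iff_norm.mp hx₀s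
    have hx₀ne : x₀ ≠ 0 := by intro h; rw [h, norm_zero] at hx₀norm; norm_num at hx₀norm
    set m := ‖T (C * B⁻¹) x₀‖ with hm
    have hmlt : m < 1 := by
      have := hP x₀ hx₀ne
      rwa [hx₀norm] at this
    have hble : ‖T (C * B⁻¹)‖ ≤ m := by
      apply ContinuousLinearMap.opNorm_le_bound _ (norm_nonneg _)
      intro x
      rcases eq_or_ne x 0 with h | h
      · simp [h]
      · have hxn : ‖x‖ ≠ 0 := norm_ne_zero_iff.mpr h
        have hu : (‖x‖⁻¹ • x) ∈ Metric.sphere (0 : EuclideanSpace ℝ (Fin n)) 1 := by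
          rw [mem_sphere_zero_iff_norm, norm_smul, norm_inv, norm_norm,
            inv_mul_cancel₀ hxn]
        have := hx₀max hu
        simp only [Set.mem_setOf_eq, _root_.map_smul, norm_smul, norm_inv, norm_norm] at this
        calc ‖T (C * B⁻¹) x‖ = ‖x‖ * (‖x‖⁻¹ * ‖T (C * B⁻¹) x‖) := by
              field_simp
          _ ≤ ‖x‖ * m := by
              apply mul_le_mul_of_nonneg_left _ (norm_nonneg _)
              exact this
          _ = m * ‖x‖ := mul_comm _ _
    calc spec2Norm (C * B⁻¹) = ‖T (C * B⁻¹)‖ := rfl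
      _ ≤ m := hble
      _ < 1 := hmlt
end

section
/- Let A ∈ ℝ^{n×n} with A + Aᵀ positive definite, U ∈ ℝ^{n×k} with k < n, γ > 0, α > 0. Then the spectral radius of T_α = (αI + γUUᵀ)^{-1}(αI − A)(αI + A)^{-1}(αI − γUUᵀ) is strictly less than 1. -/
open Matrix

/-- Iteration matrix of the alternating splitting scheme. -/
noncomputable def Titer {n k : ℕ} (A : Matrix (Fin n) (Fin n) ℝ)
    (U : Matrix (Fin n) (Fin k) ℝ) (α γ : ℝ) : Matrix (Fin n) (Fin n) ℝ :=
  (α • 1 + γ • (U * Uᵀ))⁻¹ * (α • 1 - A) * (α • 1 + A)⁻¹ * (α • 1 - γ • (U * Uᵀ))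

private lemma map_inv_comm {n : ℕ} (M : Matrix (Fin n) (Fin n) ℝ) (h : IsUnit M.det) :
    (M⁻¹).map (algebraMap ℝ ℂ) = (M.map (algebraMap ℝ ℂ))⁻¹ := by
  symm
  apply Matrix.inv_eq_right_inv
  rw [← Matrix.map_mul, Matrix.mul_nonsing_inv M h,
    Matrix.map_one _ (map_zero _) (map_one _)]

private lemma map_smul_one_add {n : ℕ} (α : ℝ) (M : Matrix (Fin n) (Fin n) ℝ) :
    (α • 1 + M).map (algebraMap ℝ ℂ) = (α : ℂ) • 1 + M.map (algebraMap ℝ ℂ) := by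
  ext i j
  by_cases h : i = j <;>
    simp [Matrix.map_apply, Matrix.one_apply, h]

private lemma map_smul_one_sub {n : ℕ} (α : ℝ) (M : Matrix (Fin n) (Fin n) ℝ) :
    (α • 1 - M).map (algebraMap ℝ ℂ) = (α : ℂ) • 1 - M.map (algebraMap ℝ ℂ) := by
  ext i j
  by_cases h : i = j <;>
    simp [Matrix.map_apply, Matrix.one_apply, h]

/-- Real part of the complex quadratic form of a real matrix. -/
private lemma re_dot_map {n : ℕ} (M : Matrix (Fin n) (Fin n) ℝ) (x : Fin n → ℂ) :
    (star x ⬝ᵥ (M.map (algebraMap ℝ ℂ)) *ᵥ x).re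
      = (fun i => (x i).re) ⬝ᵥ (M *ᵥ fun i => (x i).re)
        + (fun i => (x i).im) ⬝ᵥ (M *ᵥ fun i => (x i).im) := by
  classical
  simp only [dotProduct, mulVec, Pi.star_apply, Matrix.map_apply, Finset.mul_sum,
    Complex.re_sum]
  rw [← Finset.sum_add_distrib]
  refine Finset.sum_congr rfl fun i _ => ?_
  rw [← Finset.sum_add_distrib]
  refine Finset.sum_congr rfl fun j _ => ?_
  simp [Complex.mul_re, Complex.mul_im]

/-- The basic norm identity. -/
private lemma key_identity {n : ℕ} (x w : Fin n → ℂ) (α : ℝ) :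
    (star ((α : ℂ) • x + w) ⬝ᵥ ((α : ℂ) • x + w)).re
      = (star ((α : ℂ) • x - w) ⬝ᵥ ((α : ℂ) • x - w)).re + 4 * α * (star x ⬝ᵥ w).re := by
  have hz : (star w ⬝ᵥ x).re = (star x ⬝ᵥ w).re := by
    rw [Matrix.star_dotProduct]
    exact Complex.conj_re _
  simp only [star_add, star_sub, star_smul, add_dotProduct, dotProduct_add,
    sub_dotProduct, dotProduct_sub, smul_dotProduct, dotProduct_smul,
    star_trivial, smul_eq_mul, Complex.add_re, Complex.sub_re]
  have hsα : star ((α : ℂ)) = (α : ℂ) := by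
    simp
  rw [hsα]
  simp only [Complex.add_re, Complex.sub_re, Complex.re_ofReal_mul]
  rw [hz]
  ring

private lemma dot_transpose {n : ℕ} (A : Matrix (Fin n) (Fin n) ℝ) (v : Fin n → ℝ) :
    v ⬝ᵥ Aᵀ *ᵥ v = v ⬝ᵥ A *ᵥ v := by
  rw [Matrix.dotProduct_mulVec, Matrix.vecMul_transpose, dotProduct_comm]

private lemma dot_H {n : ℕ} (A : Matrix (Fin n) (Fin n) ℝ) (v : Fin n → ℝ) :
    v ⬝ᵥ (A + Aᵀ) *ᵥ v = 2 * (v ⬝ᵥ A *ᵥ v) := by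
  rw [Matrix.add_mulVec, dotProduct_add, dot_transpose]; ring

private lemma det_unit_Q {n : ℕ} {A : Matrix (Fin n) (Fin n) ℝ} (hA : (A + Aᵀ).PosDef)
    {α : ℝ} (hα : 0 < α) : IsUnit (α • (1 : Matrix (Fin n) (Fin n) ℝ) + A).det := by
  rw [isUnit_iff_ne_zero]
  intro hdet
  obtain ⟨v, hv, hveq⟩ := (Matrix.exists_mulVec_eq_zero_iff).mpr hdet
  have h1 : v ⬝ᵥ ((α • (1 : Matrix (Fin n) (Fin n) ℝ) + A) *ᵥ v) = 0 := by
    rw [hveq, dotProduct_zero]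
  rw [Matrix.add_mulVec, dotProduct_add, Matrix.smul_mulVec,
    Matrix.one_mulVec, dotProduct_smul] at h1
  have h2 : 0 < v ⬝ᵥ A *ᵥ v := by
    have := hA.dotProduct_mulVec_pos hv
    rw [star_trivial, dot_H] at this
    linarith
  have h3 : 0 < v ⬝ᵥ v := by
    have := Matrix.dotProduct_star_self_pos_iff.mpr hv
    rwa [star_trivial] at this
  simp only [smul_eq_mul] at h1
  nlinarith

private lemma UUt_nonneg {n k : ℕ} (U : Matrix (Fin n) (Fin k) ℝ) (v : Fin n → ℝ) :
    0 ≤ v ⬝ᵥ (U * Uᵀ) *ᵥ v := by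
  have h1 : (U * Uᵀ).PosSemidef := by
    simpa [Matrix.conjTranspose_eq_transpose_of_trivial] using
      Matrix.posSemidef_self_mul_conjTranspose U
  have := h1.dotProduct_mulVec_nonneg v
  rwa [star_trivial] at this

private lemma det_unit_P {n k : ℕ} (U : Matrix (Fin n) (Fin k) ℝ) {α γ : ℝ}
    (hα : 0 < α) (hγ : 0 < γ) :
    IsUnit (α • (1 : Matrix (Fin n) (Fin n) ℝ) + γ • (U * Uᵀ)).det := by
  rw [isUnit_iff_ne_zero]
  intro hdet
  obtain ⟨v, hv, hveq⟩ := (Matrix.exists_mulVec_eq_zero_iff).mpr hdet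
  have h1 : v ⬝ᵥ ((α • (1 : Matrix (Fin n) (Fin n) ℝ) + γ • (U * Uᵀ)) *ᵥ v) = 0 := by
    rw [hveq, dotProduct_zero]
  rw [Matrix.add_mulVec, dotProduct_add, Matrix.smul_mulVec,
    Matrix.one_mulVec, dotProduct_smul, Matrix.smul_mulVec, dotProduct_smul] at h1
  have h2 := UUt_nonneg U v
  have h3 : 0 < v ⬝ᵥ v := by
    have := Matrix.dotProduct_star_self_pos_iff.mpr hv
    rwa [star_trivial] at this
  simp only [smul_eq_mul] at h1
  nlinarith

private lemma re_dot_A_pos {n : ℕ} {A : Matrix (Fin n) (Fin n) ℝ} (hA : (A + Aᵀ).PosDef)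
    {y : Fin n → ℂ} (hy : y ≠ 0) :
    0 < (star y ⬝ᵥ (A.map (algebraMap ℝ ℂ)) *ᵥ y).re := by
  rw [re_dot_map]
  set a : Fin n → ℝ := fun i => (y i).re with ha
  set b : Fin n → ℝ := fun i => (y i).im with hb
  have hab : a ≠ 0 ∨ b ≠ 0 := by
    by_contra h
    push_neg at h
    apply hy
    funext i
    have h1 : a i = 0 := by rw [h.1]; rfl
    have h2 : b i = 0 := by rw [h.2]; rfl
    exact Complex.ext h1 h2
  have key : ∀ v : Fin n → ℝ, v ≠ 0 → 0 < v ⬝ᵥ A *ᵥ v := by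
    intro v hv
    have := hA.dotProduct_mulVec_pos hv
    rw [star_trivial, dot_H] at this
    linarith
  have keynn : ∀ v : Fin n → ℝ, 0 ≤ v ⬝ᵥ A *ᵥ v := by
    intro v
    rcases eq_or_ne v 0 with rfl | hv
    · simp
    · exact le_of_lt (key v hv)
  rcases hab with h | h
  · have := key a h
    have := keynn b
    linarith
  · have := key b h
    have := keynn a
    linarith

private lemma re_dot_S_nonneg {n k : ℕ} (U : Matrix (Fin n) (Fin k) ℝ) {γ : ℝ} (hγ : 0 < γ)
    (x : Fin n → ℂ) :
    0 ≤ (star x ⬝ᵥ ((γ • (U * Uᵀ)).map (algebraMap ℝ ℂ)) *ᵥ x).re := by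
  rw [re_dot_map]
  have key : ∀ v : Fin n → ℝ, 0 ≤ v ⬝ᵥ (γ • (U * Uᵀ)) *ᵥ v := by
    intro v
    rw [Matrix.smul_mulVec, dotProduct_smul, smul_eq_mul]
    exact mul_nonneg (le_of_lt hγ) (UUt_nonneg U v)
  have h1 := key fun i => (x i).re
  have h2 := key fun i => (x i).im
  linarith

private lemma dot_smul_self {n : ℕ} (μ : ℂ) (z : Fin n → ℂ) :
    (star (μ • z) ⬝ᵥ (μ • z)).re = ‖μ‖ ^ 2 * (star z ⬝ᵥ z).re := by
  rw [star_smul, smul_dotProduct, dotProduct_smul, smul_eq_mul, smul_eq_mul, ← mul_assoc]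
  have h1 : (star μ) * μ = ((‖μ‖ ^ 2 : ℝ) : ℂ) := by
    rw [Complex.star_def, ← Complex.normSq_eq_conj_mul_self, Complex.normSq_eq_norm_sq]
  rw [h1, Complex.re_ofReal_mul]

open ComplexOrder in
private lemma dot_self_re_pos {n : ℕ} {w : Fin n → ℂ} (hw : w ≠ 0) :
    0 < (star w ⬝ᵥ w).re := by
  have h := Matrix.dotProduct_star_self_pos_iff.mpr hw
  rw [Complex.lt_def] at h
  simpa using h.1

theorem stmt_4 {n k : ℕ} (hkn : k < n) (A : Matrix (Fin n) (Fin n) ℝ)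
    (U : Matrix (Fin n) (Fin k) ℝ) (hA : (A + Aᵀ).PosDef)
    (α γ : ℝ) (hα : 0 < α) (hγ : 0 < γ) :
    ∀ μ ∈ spectrum ℂ ((Titer A U α γ).map (algebraMap ℝ ℂ)), ‖μ‖ < 1 := by
  intro μ hμ
  set φ := algebraMap ℝ ℂ with hφ
  set Sr : Matrix (Fin n) (Fin n) ℝ := γ • (U * Uᵀ) with hSr
  -- complex matrices
  set Ac : Matrix (Fin n) (Fin n) ℂ := A.map φ with hAc
  set Sc : Matrix (Fin n) (Fin n) ℂ := Sr.map φ with hSc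
  set P' : Matrix (Fin n) (Fin n) ℂ := (α : ℂ) • 1 + Sc with hP'
  set Q' : Matrix (Fin n) (Fin n) ℂ := (α : ℂ) • 1 + Ac with hQ'
  set Bm' : Matrix (Fin n) (Fin n) ℂ := (α : ℂ) • 1 - Ac with hBm'
  set C' : Matrix (Fin n) (Fin n) ℂ := (α : ℂ) • 1 - Sc with hC'
  have hPdet : IsUnit (α • (1 : Matrix (Fin n) (Fin n) ℝ) + Sr).det := det_unit_P U hα hγ
  have hQdet : IsUnit (α • (1 : Matrix (Fin n) (Fin n) ℝ) + A).det := det_unit_Q hA hα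
  have hPmap : (α • (1 : Matrix (Fin n) (Fin n) ℝ) + Sr).map φ = P' := map_smul_one_add α Sr
  have hQmap : (α • (1 : Matrix (Fin n) (Fin n) ℝ) + A).map φ = Q' := map_smul_one_add α A
  have hBmap : (α • (1 : Matrix (Fin n) (Fin n) ℝ) - A).map φ = Bm' := map_smul_one_sub α A
  have hCmap : (α • (1 : Matrix (Fin n) (Fin n) ℝ) - Sr).map φ = C' := map_smul_one_sub α Sr
  have hP'det : IsUnit P'.det := by
    have h0 : IsUnit (α • (1 : Matrix (Fin n) (Fin n) ℝ) + Sr) :=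
      (Matrix.isUnit_iff_isUnit_det _).mpr hPdet
    have h1 := h0.map φ.mapMatrix
    rw [RingHom.mapMatrix_apply, hPmap] at h1
    exact (Matrix.isUnit_iff_isUnit_det _).mp h1
  have hQ'det : IsUnit Q'.det := by
    have h0 : IsUnit (α • (1 : Matrix (Fin n) (Fin n) ℝ) + A) :=
      (Matrix.isUnit_iff_isUnit_det _).mpr hQdet
    have h1 := h0.map φ.mapMatrix
    rw [RingHom.mapMatrix_apply, hQmap] at h1
    exact (Matrix.isUnit_iff_isUnit_det _).mp h1
  -- the mapped iteration matrix
  have hT : (Titer A U α γ).map φ = P'⁻¹ * Bm' * Q'⁻¹ * C' := by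
    show ((α • 1 + Sr)⁻¹ * (α • 1 - A) * (α • 1 + A)⁻¹ * (α • 1 - Sr)).map φ = _
    rw [Matrix.map_mul, Matrix.map_mul, Matrix.map_mul, map_inv_comm _ hPdet,
      map_inv_comm _ hQdet, hPmap, hQmap, hBmap, hCmap]
  rw [hT] at hμ
  -- eigenvector
  rw [spectrum.mem_iff] at hμ
  have hdet0 : ((algebraMap ℂ (Matrix (Fin n) (Fin n) ℂ)) μ - P'⁻¹ * Bm' * Q'⁻¹ * C').det = 0 := by
    by_contra h
    exact hμ ((Matrix.isUnit_iff_isUnit_det _).mpr (isUnit_iff_ne_zero.mpr h))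
  obtain ⟨v, hv, hveq⟩ := (Matrix.exists_mulVec_eq_zero_iff).mpr hdet0
  have heig : (P'⁻¹ * Bm' * Q'⁻¹ * C') *ᵥ v = μ • v := by
    rw [Matrix.sub_mulVec] at hveq
    have halg : (algebraMap ℂ (Matrix (Fin n) (Fin n) ℂ)) μ *ᵥ v = μ • v := by
      rw [Algebra.algebraMap_eq_smul_one, Matrix.smul_mulVec, Matrix.one_mulVec]
    rw [halg] at hveq
    linear_combination (norm := module) -hveq
  -- define y
  set y : Fin n → ℂ := Q'⁻¹ *ᵥ (C' *ᵥ v) with hy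
  have h1 : Bm' *ᵥ y = μ • (P' *ᵥ v) := by
    have e1 : P' * (P'⁻¹ * Bm' * Q'⁻¹ * C') = Bm' * (Q'⁻¹ * C') := by
      simp only [Matrix.mul_assoc]
      rw [Matrix.mul_nonsing_inv_cancel_left _ _ hP'det]
    calc Bm' *ᵥ y = (Bm' * (Q'⁻¹ * C')) *ᵥ v := by
          rw [hy, ← Matrix.mulVec_mulVec, ← Matrix.mulVec_mulVec]
      _ = P' *ᵥ ((P'⁻¹ * Bm' * Q'⁻¹ * C') *ᵥ v) := by
          rw [Matrix.mulVec_mulVec, e1]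
      _ = μ • (P' *ᵥ v) := by rw [heig, Matrix.mulVec_smul]
  have h2 : Q' *ᵥ y = C' *ᵥ v := by
    rw [hy, Matrix.mulVec_mulVec, Matrix.mul_nonsing_inv _ hQ'det, Matrix.one_mulVec]
  -- mulVec expansions
  have hQy : Q' *ᵥ y = (α : ℂ) • y + Ac *ᵥ y := by
    rw [hQ', Matrix.add_mulVec, Matrix.smul_mulVec, Matrix.one_mulVec]
  have hBy : Bm' *ᵥ y = (α : ℂ) • y - Ac *ᵥ y := by
    rw [hBm', Matrix.sub_mulVec, Matrix.smul_mulVec, Matrix.one_mulVec]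
  have hPv : P' *ᵥ v = (α : ℂ) • v + Sc *ᵥ v := by
    rw [hP', Matrix.add_mulVec, Matrix.smul_mulVec, Matrix.one_mulVec]
  have hCv : C' *ᵥ v = (α : ℂ) • v - Sc *ᵥ v := by
    rw [hC', Matrix.sub_mulVec, Matrix.smul_mulVec, Matrix.one_mulVec]
  -- the two key identities
  set rA : ℝ := (star y ⬝ᵥ Ac *ᵥ y).re with hrA
  set rS : ℝ := (star v ⬝ᵥ Sc *ᵥ v).re with hrS
  have eqA : (star (Q' *ᵥ y) ⬝ᵥ (Q' *ᵥ y)).re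
      = (star (Bm' *ᵥ y) ⬝ᵥ (Bm' *ᵥ y)).re + 4 * α * rA := by
    rw [hQy, hBy]
    exact key_identity y (Ac *ᵥ y) α
  have eqS : (star (P' *ᵥ v) ⬝ᵥ (P' *ᵥ v)).re
      = (star (C' *ᵥ v) ⬝ᵥ (C' *ᵥ v)).re + 4 * α * rS := by
    rw [hPv, hCv]
    exact key_identity v (Sc *ᵥ v) α
  have hrSnn : 0 ≤ rS := re_dot_S_nonneg U hγ v
  -- positivity of N(P'v)
  have hPvne : P' *ᵥ v ≠ 0 := by
    intro h0
    apply hv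
    have : P'⁻¹ *ᵥ (P' *ᵥ v) = v := by
      rw [Matrix.mulVec_mulVec, Matrix.nonsing_inv_mul _ hP'det, Matrix.one_mulVec]
    rw [h0, Matrix.mulVec_zero] at this
    exact this.symm
  have hNPpos : 0 < (star (P' *ᵥ v) ⬝ᵥ (P' *ᵥ v)).re := dot_self_re_pos hPvne
  rcases eq_or_ne y 0 with hy0 | hy0
  · -- y = 0 : μ = 0
    have : μ • (P' *ᵥ v) = 0 := by
      rw [← h1, hy0, Matrix.mulVec_zero]
    rcases smul_eq_zero.mp this with h | h
    · rw [h]; norm_num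
    · exact absurd h hPvne
  · -- y ≠ 0
    have hrApos : 0 < rA := re_dot_A_pos hA hy0
    have hfin : (star (P' *ᵥ v) ⬝ᵥ (P' *ᵥ v)).re
        = ‖μ‖ ^ 2 * (star (P' *ᵥ v) ⬝ᵥ (P' *ᵥ v)).re + 4 * α * rA + 4 * α * rS :=
      calc (star (P' *ᵥ v) ⬝ᵥ (P' *ᵥ v)).re
          = (star (C' *ᵥ v) ⬝ᵥ (C' *ᵥ v)).re + 4 * α * rS := eqS
        _ = (star (Q' *ᵥ y) ⬝ᵥ (Q' *ᵥ y)).re + 4 * α * rS := by rw [h2]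
        _ = (star (Bm' *ᵥ y) ⬝ᵥ (Bm' *ᵥ y)).re + 4 * α * rA + 4 * α * rS := by rw [eqA]
        _ = ‖μ‖ ^ 2 * (star (P' *ᵥ v) ⬝ᵥ (P' *ᵥ v)).re + 4 * α * rA + 4 * α * rS := by
            rw [h1, dot_smul_self]
    have hμnn : 0 ≤ ‖μ‖ := norm_nonneg μ
    have hsq : ‖μ‖ ^ 2 < 1 := by
      by_contra h
      push_neg at h
      nlinarith [mul_pos hα hrApos, mul_nonneg hα.le hrSnn,
        mul_le_mul_of_nonneg_right h hNPpos.le]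
    calc ‖μ‖ < 1 := by nlinarith
end

section
/- Eliminating the intermediate iterate from the alternating scheme yields the one-step iteration x^{(m+1)} = (I − P_α^{-1}A_γ)x^{(m)} + P_α^{-1}b, where P_α = (1/(2α))(A + αI)(αI + γUUᵀ); that is, the iteration matrix satisfies (αI + γUUᵀ)^{-1}(αI − A)(αI + A)^{-1}(αI − γUUᵀ) = I − P_α^{-1}(A + γUUᵀ). -/
open Matrix

theorem stmt_8 {n k : ℕ} (A : Matrix (Fin n) (Fin n) ℝ)
    (U : Matrix (Fin n) (Fin k) ℝ) (α γ : ℝ) (hα : 0 < α) (hγ : 0 < γ)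
    (hAinv : IsUnit (α • (1 : Matrix (Fin n) (Fin n) ℝ) + A))
    (Pα : Matrix (Fin n) (Fin n) ℝ)
    (hP : Pα = (1 / (2 * α)) • ((A + α • 1) * (α • 1 + γ • (U * Uᵀ)))) :
    (α • 1 + γ • (U * Uᵀ))⁻¹ * ((α • 1 - A) * ((α • 1 + A)⁻¹ *
        (α • 1 - γ • (U * Uᵀ)))) =
      1 - Pα⁻¹ * (A + γ • (U * Uᵀ)) := by
  set C : Matrix (Fin n) (Fin n) ℝ := γ • (U * Uᵀ) with hC
  -- C is posSemidef
  have hCps : C.PosSemidef := by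
    have h := posSemidef_self_mul_conjTranspose (Real.sqrt γ • U)
    have : (Real.sqrt γ • U) * (Real.sqrt γ • U)ᴴ = C := by
      rw [conjTranspose_smul, smul_mul, Matrix.mul_smul, smul_smul]
      simp only [hC, star_trivial, Real.mul_self_sqrt hγ.le]
      rw [conjTranspose_eq_transpose_of_trivial]
    rwa [this] at h
  have hBpd : (α • (1 : Matrix (Fin n) (Fin n) ℝ) + C).PosDef := by
    refine Matrix.PosDef.add_posSemidef ?_ hCps
    have h1 : (α • (1 : Matrix (Fin n) (Fin n) ℝ)) = Matrix.diagonal (fun _ => α) := by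
      ext i j; simp [Matrix.one_apply, Matrix.diagonal_apply]
    rw [h1]
    exact (Matrix.posDef_diagonal_iff).mpr fun _ => hα
  have hBu : IsUnit (α • (1 : Matrix (Fin n) (Fin n) ℝ) + C) := hBpd.isUnit
  have hBdet : IsUnit (α • (1 : Matrix (Fin n) (Fin n) ℝ) + C).det :=
    (Matrix.isUnit_iff_isUnit_det _).mp hBu
  have hAdet : IsUnit (α • (1 : Matrix (Fin n) (Fin n) ℝ) + A).det :=
    (Matrix.isUnit_iff_isUnit_det _).mp hAinv
  set B : Matrix (Fin n) (Fin n) ℝ := α • 1 + C with hBdef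
  set AA : Matrix (Fin n) (Fin n) ℝ := α • 1 + A with hAAdef
  have h2α : (2*α) ≠ 0 := by positivity
  have hc : (1/(2*α)) ≠ 0 := by positivity
  letI : Invertible (1/(2*α)) := invertibleOfNonzero hc
  have hABdet : IsUnit (AA * B).det := by
    rw [Matrix.det_mul]; exact hAdet.mul hBdet
  have hPinv : Pα⁻¹ = (2*α) • (B⁻¹ * AA⁻¹) := by
    rw [hP, show (A + α • 1) = AA from add_comm _ _,
      Matrix.inv_smul (A := AA * B) (1/(2*α)) hABdet, Matrix.mul_inv_rev]
    congr 1
    apply invOf_eq_right_inv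
    field_simp
  have hcomm : (α • 1 - A) * AA⁻¹ = AA⁻¹ * (α • 1 - A) := by
    have h1 : (α • 1 - A) * AA = AA * (α • 1 - A) := by
      simp only [hAAdef, sub_mul, mul_sub, add_mul, mul_add, Matrix.smul_mul,
        Matrix.mul_smul, one_mul, mul_one]
      abel
    calc (α • 1 - A) * AA⁻¹
        = AA⁻¹ * AA * ((α • 1 - A) * AA⁻¹) := by
          rw [Matrix.nonsing_inv_mul _ hAdet, one_mul]
      _ = AA⁻¹ * ((α • 1 - A) * AA * AA⁻¹) := by
          rw [mul_assoc, ← mul_assoc AA, ← h1, mul_assoc]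
      _ = AA⁻¹ * (α • 1 - A) := by
          rw [mul_assoc (α • 1 - A), Matrix.mul_nonsing_inv _ hAdet, mul_one]
  have key : (α • 1 - A) * (α • 1 - C) = AA * B - (2*α) • (A + C) := by
    simp only [hAAdef, hBdef, sub_mul, mul_sub, add_mul, mul_add, Matrix.smul_mul,
      Matrix.mul_smul, one_mul, mul_one, smul_smul, smul_add, two_mul, add_smul]
    abel
  have hone : (1 : Matrix (Fin n) (Fin n) ℝ) = B⁻¹ * AA⁻¹ * (AA * B) := by
    rw [mul_assoc, ← mul_assoc AA⁻¹, Matrix.nonsing_inv_mul _ hAdet, one_mul,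
      Matrix.nonsing_inv_mul _ hBdet]
  rw [hPinv]
  calc B⁻¹ * ((α • 1 - A) * (AA⁻¹ * (α • 1 - C)))
      = B⁻¹ * ((α • 1 - A) * AA⁻¹ * (α • 1 - C)) := by rw [mul_assoc]
    _ = B⁻¹ * AA⁻¹ * ((α • 1 - A) * (α • 1 - C)) := by
        rw [hcomm, mul_assoc AA⁻¹, ← mul_assoc B⁻¹]
    _ = B⁻¹ * AA⁻¹ * (AA * B) - B⁻¹ * AA⁻¹ * ((2*α) • (A + C)) := by
        rw [key, mul_sub]
    _ = 1 - (2*α) • (B⁻¹ * AA⁻¹) * (A + C) := by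
        rw [← hone, Matrix.mul_smul, Matrix.smul_mul]
end

section
/- Let A be singular with A + γUUᵀ nonsingular, and suppose (λ, x) is an eigenpair of P_α^{-1}(A + γUUᵀ) with x ∈ Ker(Aᵀ) and ‖x‖₂ = 1. Then Uᵀx ≠ 0 and λ = 2/(1 + α/(γ‖Uᵀx‖₂²)), which is real and independent of A. -/
open Matrix

lemma aux_dot {m p : ℕ} (U : Matrix (Fin m) (Fin p) ℝ) (v : Fin m → ℝ) (w : Fin p → ℝ) :
    v ⬝ᵥ (U *ᵥ w) = (Uᵀ *ᵥ v) ⬝ᵥ w := by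
  rw [Matrix.dotProduct_mulVec, Matrix.mulVec_transpose]

lemma aux_self_nonneg {m : ℕ} (v : Fin m → ℝ) : 0 ≤ v ⬝ᵥ v :=
  Finset.sum_nonneg fun i _ => mul_self_nonneg (v i)

lemma aux_isUnit {m : ℕ} (M : Matrix (Fin m) (Fin m) ℝ)
    (h : ∀ v, M *ᵥ v = 0 → v = 0) : IsUnit M := by
  rw [← Matrix.mulVec_injective_iff_isUnit]
  intro u v huv
  have := h (u - v) (by rw [Matrix.mulVec_sub, huv, sub_self])
  exact sub_eq_zero.mp this

theorem stmt_12 {n k : ℕ} (A : Matrix (Fin n) (Fin n) ℝ)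
    (U : Matrix (Fin n) (Fin k) ℝ) (hA : (A + Aᵀ).PosSemidef)
    (hsing : ¬ IsUnit A) (α γ : ℝ) (hα : 0 < α) (hγ : 0 < γ)
    (hinv : IsUnit (A + γ • (U * Uᵀ)))
    (Pα : Matrix (Fin n) (Fin n) ℝ)
    (hP : Pα = (1 / (2 * α)) • ((A + α • 1) * (α • 1 + γ • (U * Uᵀ))))
    (lam : ℝ) (x : Fin n → ℝ) (hx : x ⬝ᵥ x = 1) (hkerAT : Aᵀ *ᵥ x = 0)
    (heig : (Pα⁻¹ * (A + γ • (U * Uᵀ))) *ᵥ x = lam • x) :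
    Uᵀ *ᵥ x ≠ 0 ∧
      lam = 2 / (1 + α / (γ * ((Uᵀ *ᵥ x) ⬝ᵥ (Uᵀ *ᵥ x)))) := by
  set M := A + γ • (U * Uᵀ) with hM
  set s := (Uᵀ *ᵥ x) ⬝ᵥ (Uᵀ *ᵥ x) with hsdef
  -- x annihilates A on the left
  have hxA : x ⬝ᵥ (A *ᵥ x) = 0 := by
    rw [aux_dot, hkerAT, zero_dotProduct]
  -- A *ᵥ x = 0
  have hsum : (A + Aᵀ) *ᵥ x = 0 := by
    rw [← hA.dotProduct_mulVec_zero_iff]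
    simp only [star_trivial, Matrix.add_mulVec, dotProduct_add, hxA, hkerAT,
      dotProduct_zero, add_zero]
  have hAx : A *ᵥ x = 0 := by
    rw [Matrix.add_mulVec, hkerAT, add_zero] at hsum; exact hsum
  have hxne : x ≠ 0 := fun h => by simp [h] at hx
  have hMinj := Matrix.mulVec_injective_iff_isUnit.mpr hinv
  -- Uᵀ x ≠ 0
  have hUx : Uᵀ *ᵥ x ≠ 0 := by
    intro h0
    apply hxne
    apply hMinj
    rw [Matrix.mulVec_zero, hM, Matrix.add_mulVec, hAx, zero_add,
      Matrix.smul_mulVec, ← Matrix.mulVec_mulVec, h0, Matrix.mulVec_zero, smul_zero]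
  have hs : 0 < s :=
    lt_of_le_of_ne (aux_self_nonneg _) fun h =>
      hUx (dotProduct_self_eq_zero.mp h.symm)
  -- quadratic form nonnegativity of A
  have hAnn : ∀ v : Fin n → ℝ, 0 ≤ v ⬝ᵥ (A *ᵥ v) := by
    intro v
    have h3 := hA.dotProduct_mulVec_nonneg v
    rw [star_trivial, Matrix.add_mulVec, dotProduct_add] at h3
    have h4 : v ⬝ᵥ (Aᵀ *ᵥ v) = v ⬝ᵥ (A *ᵥ v) := by
      rw [aux_dot, Matrix.transpose_transpose, dotProduct_comm]
    linarith
  -- invertibility of the two factors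
  have hBu : IsUnit (A + α • (1 : Matrix (Fin n) (Fin n) ℝ)) := by
    apply aux_isUnit
    intro v hv
    have h1 : v ⬝ᵥ ((A + α • (1 : Matrix (Fin n) (Fin n) ℝ)) *ᵥ v) = 0 := by
      rw [hv, dotProduct_zero]
    rw [Matrix.add_mulVec, dotProduct_add, Matrix.smul_mulVec,
      Matrix.one_mulVec, dotProduct_smul, smul_eq_mul] at h1
    have h2 := hAnn v
    have h5 := aux_self_nonneg v
    have h6 : v ⬝ᵥ v = 0 := by nlinarith
    exact dotProduct_self_eq_zero.mp h6
  have hCu : IsUnit (α • (1 : Matrix (Fin n) (Fin n) ℝ) + γ • (U * Uᵀ)) := by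
    apply aux_isUnit
    intro v hv
    have h1 : v ⬝ᵥ ((α • (1 : Matrix (Fin n) (Fin n) ℝ) + γ • (U * Uᵀ)) *ᵥ v) = 0 := by
      rw [hv, dotProduct_zero]
    rw [Matrix.add_mulVec, dotProduct_add, Matrix.smul_mulVec,
      Matrix.one_mulVec, dotProduct_smul, smul_eq_mul, Matrix.smul_mulVec,
      dotProduct_smul, smul_eq_mul, ← Matrix.mulVec_mulVec, aux_dot] at h1
    have h5 := aux_self_nonneg v
    have h6 := aux_self_nonneg (Uᵀ *ᵥ v)
    have h7 : v ⬝ᵥ v = 0 := by nlinarith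
    exact dotProduct_self_eq_zero.mp h7
  have hc : (1 / (2 * α) : ℝ) ≠ 0 := by positivity
  have hPu : IsUnit Pα := by
    rw [hP, Matrix.isUnit_iff_isUnit_det, Matrix.det_smul, Matrix.det_mul]
    exact ((isUnit_iff_ne_zero.mpr hc).pow _).mul
      (((Matrix.isUnit_iff_isUnit_det _).mp hBu).mul
        ((Matrix.isUnit_iff_isUnit_det _).mp hCu))
  -- the eigen-equation without the inverse
  have hMx : M *ᵥ x = lam • (Pα *ᵥ x) := by
    have h := congrArg (fun v => Pα *ᵥ v) heig
    simp only [Matrix.mulVec_mulVec] at h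
    rw [← Matrix.mul_assoc, Matrix.mul_nonsing_inv _ ((Matrix.isUnit_iff_isUnit_det _).mp hPu),
      Matrix.one_mul, Matrix.mulVec_smul] at h
    exact h
  -- take dot products with x
  have hdot := congrArg (fun v => x ⬝ᵥ v) hMx
  simp only [dotProduct_smul, smul_eq_mul] at hdot
  have hL : x ⬝ᵥ (M *ᵥ x) = γ * s := by
    rw [hM, Matrix.add_mulVec, dotProduct_add, hxA, zero_add, Matrix.smul_mulVec,
      dotProduct_smul, smul_eq_mul, ← Matrix.mulVec_mulVec, aux_dot]
  have hR : x ⬝ᵥ (Pα *ᵥ x) = (α + γ * s) / 2 := by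
    rw [hP, Matrix.smul_mulVec, dotProduct_smul, smul_eq_mul,
      ← Matrix.mulVec_mulVec, aux_dot]
    have hT : (A + α • (1 : Matrix (Fin n) (Fin n) ℝ))ᵀ *ᵥ x = α • x := by
      rw [Matrix.transpose_add, Matrix.transpose_smul, Matrix.transpose_one,
        Matrix.add_mulVec, hkerAT, zero_add, Matrix.smul_mulVec, Matrix.one_mulVec]
    rw [hT, smul_dotProduct, smul_eq_mul, Matrix.add_mulVec, dotProduct_add,
      Matrix.smul_mulVec, Matrix.one_mulVec, dotProduct_smul, smul_eq_mul, hx,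
      Matrix.smul_mulVec, dotProduct_smul, smul_eq_mul, ← Matrix.mulVec_mulVec, aux_dot]
    field_simp
    ring
  rw [hL, hR] at hdot
  refine ⟨hUx, ?_⟩
  have hgs : 0 < γ * s := by positivity
  have hden : (0:ℝ) < 1 + α / (γ * s) := by positivity
  field_simp
  nlinarith [hdot]
end
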